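/- arXiv:2110.12169 — 2 statements merged into one kernel-verified Lean document; each statement's English description precedes it below -/
import Mathlib

section
/- Let n ≥ 2 and let W be a symmetric n×n real matrix with eigenvalues κ ∈ Γₖ⁺ for some 2 ≤ k ≤ n−1. If the k-th Newton tensor Tₖ(W) is a scalar multiple of the identity (equivalently, its tracefree part vanishes), then W = c·Id for some constant c > 0. -/
open Finset Matrix

/-- k-th elementary symmetric polynomial of κ ∈ ℝⁿ. -/
noncomputable def esymmVec (n k : ℕ) (κ : Fin n → ℝ) : ℝ :=
  ∑ s ∈ Finset.univ.powersetCard k, ∏ i ∈ s, κ i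

/-- Newton tensors: T₀ = Id, Tₘ = Hₘ·Id − W·T_{m−1}, where Hf m plays the role of Hₘ. -/
noncomputable def newtonT (n : ℕ) (W : Matrix (Fin n) (Fin n) ℝ) (Hf : ℕ → ℝ) :
    ℕ → Matrix (Fin n) (Fin n) ℝ
  | 0 => 1
  | (m + 1) => Hf (m + 1) • (1 : Matrix (Fin n) (Fin n) ℝ) - W * newtonT n W Hf m

/-- Frobenius inner product. -/
def finner {n : ℕ} (X Y : Matrix (Fin n) (Fin n) ℝ) : ℝ := ∑ i, ∑ j, X i j * Y i j

/-- Frobenius norm squared. -/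
def fnormSq {n : ℕ} (X : Matrix (Fin n) (Fin n) ℝ) : ℝ := finner X X

/-! ### Auxiliary lemmas -/

/-- Sum of products over `m`-subsets of `s` (σ_m of the entries of κ indexed by `s`). -/
noncomputable def Esub {n : ℕ} (κ : Fin n → ℝ) (s : Finset (Fin n)) (m : ℕ) : ℝ :=
  ∑ t ∈ s.powersetCard m, ∏ j ∈ t, κ j

lemma esymmVec_eq_Esub (n m : ℕ) (κ : Fin n → ℝ) : esymmVec n m κ = Esub κ Finset.univ m := rfl

lemma Esub_zero {n : ℕ} (κ : Fin n → ℝ) (s : Finset (Fin n)) : Esub κ s 0 = 1 := by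
  simp [Esub]

lemma Esub_erase {n : ℕ} (κ : Fin n → ℝ) (s : Finset (Fin n)) {i : Fin n} (hi : i ∈ s) (m : ℕ) :
    Esub κ s (m + 1) = Esub κ (s.erase i) (m + 1) + κ i * Esub κ (s.erase i) m := by
  unfold Esub
  conv_lhs => rw [← Finset.insert_erase hi,
    Finset.powersetCard_succ_insert (Finset.notMem_erase i s)]
  rw [Finset.sum_union, Finset.sum_image, Finset.mul_sum]
  · congr 1
    apply Finset.sum_congr rfl
    intro t ht
    rw [Finset.mem_powersetCard] at ht
    have hit : i ∉ t := fun h => (Finset.notMem_erase i s) (ht.1 h)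
    rw [Finset.prod_insert hit]
  · intro t ht u hu h
    rw [Finset.mem_coe, Finset.mem_powersetCard] at ht hu
    have hit : i ∉ t := fun h2 => (Finset.notMem_erase i s) (ht.1 h2)
    have hiu : i ∉ u := fun h2 => (Finset.notMem_erase i s) (hu.1 h2)
    have := congrArg (Finset.erase · i) h
    simpa [Finset.erase_insert, hit, hiu] using this
  · rw [Finset.disjoint_right]
    intro t ht ht'
    rw [Finset.mem_image] at ht
    obtain ⟨u, hu, rfl⟩ := ht
    rw [Finset.mem_powersetCard] at ht'
    exact (Finset.notMem_erase i s) (ht'.1 (Finset.mem_insert_self i u))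

lemma Esub_trace {n : ℕ} (κ : Fin n → ℝ) (k : ℕ) :
    ∑ i, Esub κ (Finset.univ.erase i) k = (n - k : ℕ) * Esub κ Finset.univ k := by
  unfold Esub
  have hfil : ∀ i : Fin n, (Finset.univ.erase i).powersetCard k
      = (Finset.univ.powersetCard k).filter (fun t => i ∉ t) := by
    intro i
    ext t
    simp [Finset.mem_powersetCard, Finset.subset_erase, and_assoc, and_comm]
  calc ∑ i, ∑ t ∈ (Finset.univ.erase i).powersetCard k, ∏ j ∈ t, κ j
      = ∑ i, ∑ t ∈ Finset.univ.powersetCard k, if i ∉ t then ∏ j ∈ t, κ j else 0 := by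
        refine Finset.sum_congr rfl fun i _ => ?_
        rw [hfil i, Finset.sum_filter]
    _ = ∑ t ∈ Finset.univ.powersetCard k, ∑ i : Fin n, if i ∉ t then ∏ j ∈ t, κ j else 0 := by
        rw [Finset.sum_comm]
    _ = (n - k : ℕ) * ∑ t ∈ Finset.univ.powersetCard k, ∏ j ∈ t, κ j := by
        rw [Finset.mul_sum]
        refine Finset.sum_congr rfl fun t ht => ?_
        rw [Finset.mem_powersetCard] at ht
        rw [Finset.sum_ite, Finset.sum_const, Finset.sum_const, smul_zero, add_zero,
          nsmul_eq_mul]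
        congr 2
        have : (Finset.univ.filter (fun i => i ∉ t)) = tᶜ := by
          ext; simp
        rw [this, Finset.card_compl, ht.2, Fintype.card_fin]

lemma Esub_pos_of_pos {n : ℕ} (κ : Fin n → ℝ) (hκ : ∀ i, 0 < κ i) (s : Finset (Fin n))
    (m : ℕ) (hm : m ≤ s.card) : 0 < Esub κ s m := by
  unfold Esub
  apply Finset.sum_pos
  · intro t _
    exact Finset.prod_pos fun j _ => hκ j
  · exact Finset.powersetCard_nonempty.2 hm

/-- If κ ∈ Γₖ⁺ and κᵢ ≤ 0, then σ_m(κ|i) > 0 for all m ≤ k−1. -/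
lemma Esub_erase_pos_of_nonpos {n k : ℕ} (κ : Fin n → ℝ)
    (hΓ : ∀ j, 1 ≤ j → j ≤ k → 0 < Esub κ Finset.univ j) {i : Fin n} (hi : κ i ≤ 0) :
    ∀ m, m + 1 ≤ k → 0 < Esub κ (Finset.univ.erase i) m := by
  intro m
  induction m with
  | zero => intro _; rw [Esub_zero]; norm_num
  | succ m ih =>
      intro hm
      have h1 : 0 < Esub κ Finset.univ (m + 1) := hΓ (m + 1) (by omega) (by omega)
      have h2 : 0 < Esub κ (Finset.univ.erase i) m := ih (by omega)
      have h3 := Esub_erase κ Finset.univ (Finset.mem_univ i) m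
      nlinarith

lemma newtonT_diagonal (n : ℕ) (κ : Fin n → ℝ) (m : ℕ) :
    newtonT n (Matrix.diagonal κ) (fun m => esymmVec n m κ) m
      = Matrix.diagonal (fun i => Esub κ (Finset.univ.erase i) m) := by
  induction m with
  | zero => simp [newtonT, Esub_zero, Matrix.diagonal_one]
  | succ m ih =>
      rw [newtonT, ih, Matrix.diagonal_mul_diagonal, Matrix.smul_one_eq_diagonal,
        Matrix.diagonal_sub]
      refine congrArg Matrix.diagonal (funext fun i => ?_)
      rw [esymmVec_eq_Esub, Esub_erase κ Finset.univ (Finset.mem_univ i) m]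
      ring

lemma newtonT_conj (n : ℕ) (U D : Matrix (Fin n) (Fin n) ℝ) (hU : U * star U = 1)
    (hU' : star U * U = 1) (Hf : ℕ → ℝ) (m : ℕ) :
    newtonT n (U * D * star U) Hf m = U * newtonT n D Hf m * star U := by
  induction m with
  | zero => simp [newtonT, ← Matrix.mul_assoc, hU]
  | succ m ih =>
      rw [newtonT, newtonT, ih]
      rw [Matrix.mul_sub, Matrix.sub_mul, Matrix.mul_smul, Matrix.smul_mul, Matrix.mul_one, hU]
      congr 1
      calc U * D * star U * (U * newtonT n D Hf m * star U)
          = U * (D * (star U * U) * newtonT n D Hf m) * star U := by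
            simp only [Matrix.mul_assoc]
        _ = U * (D * newtonT n D Hf m) * star U := by rw [hU', Matrix.mul_one]

/-- If the k-th Newton tensor of a symmetric matrix with eigenvalues in Γₖ⁺ (2 ≤ k ≤ n−1)
is a scalar multiple of the identity, then W = c·Id with c > 0. -/
theorem newton_tensor_tracefree_umbilic (n k : ℕ) (hn : 2 ≤ n) (hk1 : 2 ≤ k) (hk2 : k ≤ n - 1)
    (W : Matrix (Fin n) (Fin n) ℝ) (hW : W.IsHermitian)
    (hΓ : ∀ i, 1 ≤ i → i ≤ k → 0 < esymmVec n i hW.eigenvalues)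
    (α : ℝ)
    (hT : newtonT n W (fun m => esymmVec n m hW.eigenvalues) k =
      α • (1 : Matrix (Fin n) (Fin n) ℝ)) :
    ∃ c : ℝ, 0 < c ∧ W = c • (1 : Matrix (Fin n) (Fin n) ℝ) := by
  set κ := hW.eigenvalues with hκdef
  set U : Matrix (Fin n) (Fin n) ℝ := (hW.eigenvectorUnitary : Matrix (Fin n) (Fin n) ℝ)
    with hUdef
  have hU : U * star U = 1 := (Matrix.mem_unitaryGroup_iff).mp hW.eigenvectorUnitary.2
  have hU' : star U * U = 1 := (Matrix.mem_unitaryGroup_iff').mp hW.eigenvectorUnitary.2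
  have hcomp : (RCLike.ofReal ∘ κ : Fin n → ℝ) = κ := by
    funext i; simp
  have hspec : W = U * Matrix.diagonal κ * star U := by
    have := hW.spectral_theorem
    rwa [hcomp] at this
  -- transfer hT to the diagonal matrix
  have hΓ' : ∀ j, 1 ≤ j → j ≤ k → 0 < Esub κ Finset.univ j := by
    intro j h1 h2; exact hΓ j h1 h2
  have hTD : Matrix.diagonal (fun i => Esub κ (Finset.univ.erase i) k)
      = α • (1 : Matrix (Fin n) (Fin n) ℝ) := by
    have h1 : newtonT n W (fun m => esymmVec n m κ) k
        = U * Matrix.diagonal (fun i => Esub κ (Finset.univ.erase i) k) * star U := by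
      conv_lhs => rw [hspec]
      rw [newtonT_conj n U (Matrix.diagonal κ) hU hU', newtonT_diagonal]
    rw [h1] at hT
    calc Matrix.diagonal (fun i => Esub κ (Finset.univ.erase i) k)
        = (star U * U) * Matrix.diagonal (fun i => Esub κ (Finset.univ.erase i) k)
          * (star U * U) := by rw [hU', Matrix.one_mul, Matrix.mul_one]
      _ = star U * (U * Matrix.diagonal (fun i => Esub κ (Finset.univ.erase i) k) * star U)
          * U := by simp only [Matrix.mul_assoc]
      _ = star U * (α • (1 : Matrix (Fin n) (Fin n) ℝ)) * U := by rw [hT]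
      _ = α • (star U * U) := by
          rw [Matrix.mul_smul, Matrix.smul_mul, Matrix.mul_one]
      _ = α • (1 : Matrix (Fin n) (Fin n) ℝ) := by rw [hU']
  -- each diagonal entry equals α
  have hEα : ∀ i, Esub κ (Finset.univ.erase i) k = α := by
    intro i
    have := congrFun (congrFun hTD i) i
    simpa [Matrix.diagonal_apply_eq, Matrix.one_apply_eq] using this
  have hkn : k ≤ n := by omega
  have hHk : 0 < Esub κ Finset.univ k := hΓ' k (by omega) le_rfl
  -- compute α via trace
  have htr : (n : ℝ) * α = ((n - k : ℕ) : ℝ) * Esub κ Finset.univ k := by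
    have := Esub_trace κ k
    rw [Finset.sum_congr rfl (fun i _ => hEα i), Finset.sum_const, Finset.card_univ,
      Fintype.card_fin, nsmul_eq_mul] at this
    exact this
  have hcast : ((n - k : ℕ) : ℝ) = (n : ℝ) - (k : ℝ) := by
    rw [Nat.cast_sub hkn]
  have hdiff : 0 < Esub κ Finset.univ k - α := by
    have hn0 : (0 : ℝ) < (n : ℝ) := by positivity
    have hk0 : (0 : ℝ) < (k : ℝ) := by exact_mod_cast (by omega : 0 < k)
    have : (n : ℝ) * (Esub κ Finset.univ k - α) = (k : ℝ) * Esub κ Finset.univ k := by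
      rw [mul_sub, htr, hcast]; ring
    nlinarith
  have hkk : k - 1 + 1 = k := by omega
  -- all eigenvalues are positive
  have hκpos : ∀ i, 0 < κ i := by
    intro i
    by_contra hneg
    push_neg at hneg
    have hP : 0 < Esub κ (Finset.univ.erase i) (k - 1) :=
      Esub_erase_pos_of_nonpos κ hΓ' hneg (k - 1) (by omega)
    have hsplit : Esub κ Finset.univ k
        = Esub κ (Finset.univ.erase i) k + κ i * Esub κ (Finset.univ.erase i) (k - 1) := by
      conv_lhs => rw [← hkk]
      rw [Esub_erase κ Finset.univ (Finset.mem_univ i) (k - 1), hkk]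
    rw [hEα i] at hsplit
    nlinarith
  -- all eigenvalues are equal
  have hκeq : ∀ i j, κ i = κ j := by
    intro i j
    rcases eq_or_ne i j with rfl | hij
    · rfl
    have hji : j ∈ Finset.univ.erase i := Finset.mem_erase.2 ⟨Ne.symm hij, Finset.mem_univ j⟩
    have hij' : i ∈ Finset.univ.erase j := Finset.mem_erase.2 ⟨hij, Finset.mem_univ i⟩
    have hcard : k - 1 ≤ ((Finset.univ.erase i).erase j).card := by
      rw [Finset.card_erase_of_mem hji, Finset.card_erase_of_mem (Finset.mem_univ i),
        Finset.card_univ, Fintype.card_fin]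
      omega
    have hQ : 0 < Esub κ ((Finset.univ.erase i).erase j) (k - 1) :=
      Esub_pos_of_pos κ hκpos _ _ hcard
    have h1 : Esub κ (Finset.univ.erase i) k
        = Esub κ ((Finset.univ.erase i).erase j) k
          + κ j * Esub κ ((Finset.univ.erase i).erase j) (k - 1) := by
      conv_lhs => rw [← hkk]
      rw [Esub_erase κ (Finset.univ.erase i) hji (k - 1), hkk]
    have h2 : Esub κ (Finset.univ.erase j) k
        = Esub κ ((Finset.univ.erase i).erase j) k
          + κ i * Esub κ ((Finset.univ.erase i).erase j) (k - 1) := by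
      conv_lhs => rw [← hkk]
      rw [Esub_erase κ (Finset.univ.erase j) hij' (k - 1), hkk, Finset.erase_right_comm]
    rw [hEα i] at h1
    rw [hEα j] at h2
    have : (κ j - κ i) * Esub κ ((Finset.univ.erase i).erase j) (k - 1) = 0 := by
      nlinarith
    have := mul_eq_zero.mp this
    rcases this with h | h
    · linarith
    · linarith
  -- conclude
  have hn0 : 0 < n := by omega
  set c := κ ⟨0, hn0⟩ with hcdef
  refine ⟨c, hκpos _, ?_⟩
  have hDc : Matrix.diagonal κ = c • (1 : Matrix (Fin n) (Fin n) ℝ) := by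
    rw [Matrix.smul_one_eq_diagonal]
    exact congrArg Matrix.diagonal (funext fun i => hκeq i ⟨0, hn0⟩)
  rw [hspec, hDc, Matrix.mul_smul, Matrix.smul_mul, Matrix.mul_one, hU]
end

section
/- Let n ≥ 2, let g be the identity metric (standard inner product) on ℝⁿ, and let h be a positive semi-definite symmetric bilinear form on ℝⁿ with H = tr h. Then the symmetric bilinear form Ric defined by Ricᵢⱼ = H·hᵢⱼ − Σₖ hᵢₖhₖⱼ is positive semi-definite; and if h is positive definite and n ≥ 2 then Ric is positive definite. -/
open Matrix

private lemma posDef_conj_unitary {n : ℕ} {A : Matrix (Fin n) (Fin n) ℝ} (hA : A.PosDef)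
    (U : Matrix (Fin n) (Fin n) ℝ) (hU : U * Uᴴ = 1) :
    (U * A * Uᴴ).PosDef := by
  refine PosDef.of_dotProduct_mulVec_pos (by simpa using isHermitian_conjTranspose_mul_mul Uᴴ hA.1) fun x hx => ?_
  have hUx : Uᴴ *ᵥ x ≠ 0 := by
    intro h0
    apply hx
    have : U *ᵥ (Uᴴ *ᵥ x) = x := by rw [mulVec_mulVec, hU, one_mulVec]
    rw [h0, mulVec_zero] at this
    exact this.symm
  simpa only [star_mulVec, dotProduct_mulVec, vecMul_vecMul, conjTranspose_conjTranspose]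
    using hA.dotProduct_mulVec_pos hUx

private lemma conj_eq {n : ℕ} (h : Matrix (Fin n) (Fin n) ℝ) (hH : h.IsHermitian) :
    h.trace • h - h * h =
      (hH.eigenvectorUnitary : Matrix (Fin n) (Fin n) ℝ) *
        diagonal (fun i => h.trace * hH.eigenvalues i - hH.eigenvalues i * hH.eigenvalues i) *
        (hH.eigenvectorUnitary : Matrix (Fin n) (Fin n) ℝ)ᴴ := by
  set U : Matrix (Fin n) (Fin n) ℝ := (hH.eigenvectorUnitary : Matrix (Fin n) (Fin n) ℝ)
  set μ := hH.eigenvalues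
  have hUU : Uᴴ * U = 1 := by
    simpa [U, star_eq_conjTranspose] using (Matrix.mem_unitaryGroup_iff').mp hH.eigenvectorUnitary.2
  have hspec : h = U * diagonal μ * Uᴴ := by
    have := hH.spectral_theorem
    simpa [U, μ, star_eq_conjTranspose, Function.comp] using this
  have hmul : h * h = U * (diagonal μ * diagonal μ) * Uᴴ := by
    conv_lhs => rw [hspec]
    simp only [mul_assoc]
    rw [← mul_assoc Uᴴ U, hUU, one_mul]
  have hsmul : h.trace • h = U * (h.trace • diagonal μ) * Uᴴ := by
    rw [Matrix.mul_smul, Matrix.smul_mul, ← hspec]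
  have hdiag : h.trace • diagonal μ - diagonal μ * diagonal μ
      = diagonal (fun i => h.trace * μ i - μ i * μ i) := by
    rw [diagonal_mul_diagonal, ← diagonal_smul, ← diagonal_sub]
    rfl
  rw [hmul, hsmul, ← Matrix.sub_mul, ← Matrix.mul_sub, hdiag]

private lemma trace_eq_sum {n : ℕ} (h : Matrix (Fin n) (Fin n) ℝ) (hH : h.IsHermitian) :
    h.trace = ∑ i, hH.eigenvalues i := by
  set U : Matrix (Fin n) (Fin n) ℝ := (hH.eigenvectorUnitary : Matrix (Fin n) (Fin n) ℝ)
  have hUU : Uᴴ * U = 1 := by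
    simpa [U, star_eq_conjTranspose] using (Matrix.mem_unitaryGroup_iff').mp hH.eigenvectorUnitary.2
  have hspec : h = U * diagonal hH.eigenvalues * Uᴴ := by
    have := hH.spectral_theorem
    simpa [U, star_eq_conjTranspose, Function.comp] using this
  conv_lhs => rw [hspec]
  rw [trace_mul_cycle, hUU, one_mul, trace_diagonal]

/-- Gauss equation consequence: if h ⪰ 0 then (tr h)·h − h² ⪰ 0; and if h ≻ 0 and n ≥ 2
then (tr h)·h − h² ≻ 0. -/
theorem gauss_ricci_nonneg (n : ℕ) (hn : 2 ≤ n) (h : Matrix (Fin n) (Fin n) ℝ) :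
    (h.PosSemidef → (h.trace • h - h * h).PosSemidef) ∧
    (h.PosDef → (h.trace • h - h * h).PosDef) := by
  constructor
  · intro hpsd
    rw [conj_eq h hpsd.1]
    apply PosSemidef.mul_mul_conjTranspose_same
    refine posSemidef_diagonal_iff.mpr fun i => ?_
    have h1 : 0 ≤ hpsd.1.eigenvalues i := hpsd.eigenvalues_nonneg i
    have h2 : hpsd.1.eigenvalues i ≤ h.trace := by
      rw [trace_eq_sum h hpsd.1]
      exact Finset.single_le_sum (fun j _ => hpsd.eigenvalues_nonneg j) (Finset.mem_univ i)
    nlinarith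
  · intro hpd
    rw [conj_eq h hpd.1]
    have hU : (hpd.1.eigenvectorUnitary : Matrix (Fin n) (Fin n) ℝ) *
        (hpd.1.eigenvectorUnitary : Matrix (Fin n) (Fin n) ℝ)ᴴ = 1 := by
      simpa [star_eq_conjTranspose] using (Matrix.mem_unitaryGroup_iff).mp hpd.1.eigenvectorUnitary.2
    refine posDef_conj_unitary (Matrix.PosDef.diagonal fun i => ?_) _ hU
    have h1 : 0 < hpd.1.eigenvalues i := hpd.eigenvalues_pos i
    have hij : ∃ j : Fin n, j ≠ i := by
      have : 1 < Fintype.card (Fin n) := by rw [Fintype.card_fin]; omega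
      exact Fintype.exists_ne_of_one_lt_card this i
    obtain ⟨j, hj⟩ := hij
    have h2 : hpd.1.eigenvalues i + hpd.1.eigenvalues j ≤ h.trace := by
      rw [trace_eq_sum h hpd.1]
      have := Finset.add_sum_erase Finset.univ hpd.1.eigenvalues (Finset.mem_univ i)
      calc hpd.1.eigenvalues i + hpd.1.eigenvalues j
          ≤ hpd.1.eigenvalues i + ∑ k ∈ Finset.univ.erase i, hpd.1.eigenvalues k := by
            gcongr
            exact Finset.single_le_sum (fun k _ => (hpd.posSemidef.eigenvalues_nonneg k))
              (Finset.mem_erase.mpr ⟨hj, Finset.mem_univ j⟩)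
        _ = ∑ k, hpd.1.eigenvalues k := this
    have h3 : 0 < hpd.1.eigenvalues j := hpd.eigenvalues_pos j
    nlinarith
end
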